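/- Let q be an odd prime power, G the Heisenberg group over F_q, Z = Z(G) its center, and K ≤ Aut(G) the cyclic group of order q² − 1 given by the maps φ(M) for M ∈ M(ε) (ε a nonsquare). Then K acts semiregularly on G∖Z, and for every K-orbit X ⊆ G∖Z the set X ∪ {e} is a transversal for Z in G; in particular |X| = q² − 1. -/

import Mathlib

/-- The Heisenberg group of dimension 3 over a field `F`, with coordinates `(x, y, z)`
corresponding to the unitriangular matrix `[[1,x,z],[0,1,y],[0,0,1]]`. -/
def Heis (F : Type*) := F × F × F

namespace Heis
variable {F : Type*} [Field F]

instance : Mul (Heis F) :=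
  ⟨fun a b => (a.1 + b.1, a.2.1 + b.2.1, a.2.2 + b.2.2 + a.1 * b.2.1)⟩
instance : One (Heis F) := ⟨((0 : F), (0 : F), (0 : F))⟩
instance : Inv (Heis F) := ⟨fun a => (-a.1, -a.2.1, -a.2.2 + a.1 * a.2.1)⟩

lemma mul_def (a b : Heis F) :
    a * b = (a.1 + b.1, a.2.1 + b.2.1, a.2.2 + b.2.2 + a.1 * b.2.1) := rfl
lemma one_def : (1 : Heis F) = ((0 : F), (0 : F), (0 : F)) := rfl
lemma inv_def (a : Heis F) : a⁻¹ = (-a.1, -a.2.1, -a.2.2 + a.1 * a.2.1) := rfl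

instance : Group (Heis F) where
  mul_assoc a b c := by
    rw [mul_def, mul_def, mul_def, mul_def]
    exact Prod.ext (by ring) (Prod.ext (by ring) (by ring))
  one_mul a := by
    rw [mul_def, one_def]
    obtain ⟨x, y, z⟩ := a
    exact Prod.ext (by simp) (Prod.ext (by simp) (by simp))
  mul_one a := by
    rw [mul_def, one_def]
    obtain ⟨x, y, z⟩ := a
    exact Prod.ext (by simp) (Prod.ext (by simp) (by simp))
  inv_mul_cancel a := by
    rw [mul_def, inv_def, one_def]
    obtain ⟨x, y, z⟩ := a
    exact Prod.ext (by simp) (Prod.ext (by simp) (by simp))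

instance [DecidableEq F] : DecidableEq (Heis F) :=
  inferInstanceAs (DecidableEq (F × F × F))

instance [Fintype F] : Fintype (Heis F) :=
  inferInstanceAs (Fintype (F × F × F))

end Heis

open Heis

/-- The cyclotomic action map `φ(M)` on the Heisenberg group, for
`M = [[α, β],[εβ, α]]`. -/
def phiFun {F : Type*} [Field F] (ε α β : F) : Heis F → Heis F := fun g =>
  (α * g.1 + ε * β * g.2.1,
   β * g.1 + α * g.2.1,
   α * β * (g.1 ^ 2 / 2 + ε * g.2.1 ^ 2 / 2) + ε * β ^ 2 * g.1 * g.2.1 +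
     (α ^ 2 - ε * β ^ 2) * g.2.2)

lemma norm_ne_zero {F : Type*} [Field F] (ε : F) (hε : ∀ γ : F, γ ^ 2 ≠ ε)
    (x y : F) (hxy : ¬(x = 0 ∧ y = 0)) : x ^ 2 - ε * y ^ 2 ≠ 0 := by
  intro h
  by_cases hy : y = 0
  · subst hy
    simp only [ne_eq, OfNat.ofNat_ne_zero, not_false_eq_true, zero_pow, mul_zero,
      sub_zero, pow_eq_zero_iff] at h
    exact hxy ⟨h, rfl⟩
  · apply hε (x / y)
    field_simp
    linear_combination h

lemma key_lemma {F : Type*} [Field F] (ε : F) (hε : ∀ γ : F, γ ^ 2 ≠ ε)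
    (x y : F) (hxy : ¬(x = 0 ∧ y = 0)) (u v : F)
    (h1 : u * x + ε * v * y = 0) (h2 : v * x + u * y = 0) : u = 0 ∧ v = 0 := by
  have hd := norm_ne_zero ε hε x y hxy
  have hv : v * (x ^ 2 - ε * y ^ 2) = 0 := by linear_combination x * h2 - y * h1
  have hv0 : v = 0 := by
    rcases mul_eq_zero.1 hv with h | h
    · exact h
    · exact absurd h hd
  subst hv0
  constructor
  · by_cases hx : x = 0
    · have hy : y ≠ 0 := fun hy => hxy ⟨hx, hy⟩
      have : u * y = 0 := by linear_combination h2
      exact (mul_eq_zero.1 this).resolve_right hy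
    · have : u * x = 0 := by linear_combination h1
      exact (mul_eq_zero.1 this).resolve_right hx
  · rfl

/-- The group `K = {φ(M) : M ∈ M(ε)} ≤ Aut(G)` acts semiregularly on `G ∖ Z` (only the
identity fixes a point outside the center), and for every `K`-orbit `X ⊆ G ∖ Z` the set
`X ∪ {e}` is a transversal for the center `Z` in `G` (it meets every coset of `Z` exactly
once); in particular `|X| = q² − 1`. -/
theorem stmt12 {F : Type*} [Field F] [Fintype F] (q : ℕ) (hq : Fintype.card F = q)
    (hodd : Odd q) (ε : F) (hε : ∀ γ : F, γ ^ 2 ≠ ε) :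
    (∀ α β : F, (α, β) ≠ (0, 0) → ∀ g : Heis F, ¬(g.1 = 0 ∧ g.2.1 = 0) →
      phiFun ε α β g = g → (α, β) = (1, 0)) ∧
    (∀ g : Heis F, ¬(g.1 = 0 ∧ g.2.1 = 0) →
      (∀ h : Heis F, ∃! x : Heis F,
        (x = 1 ∨ ∃ α β : F, (α, β) ≠ (0, 0) ∧ x = phiFun ε α β g) ∧
          (x * h⁻¹).1 = 0 ∧ (x * h⁻¹).2.1 = 0) ∧
      {h : Heis F | ∃ α β : F, (α, β) ≠ (0, 0) ∧ h = phiFun ε α β g}.ncard = q ^ 2 - 1) := by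
  constructor
  · -- semiregularity
    intro α β hαβ g hg hfix
    have h1 : α * g.1 + ε * β * g.2.1 = g.1 := congrArg (fun p : Heis F => p.1) hfix
    have h2 : β * g.1 + α * g.2.1 = g.2.1 := congrArg (fun p : Heis F => p.2.1) hfix
    obtain ⟨hu, hv⟩ := key_lemma ε hε g.1 g.2.1 hg (α - 1) β
      (by linear_combination h1) (by linear_combination h2)
    have : α = 1 := by linear_combination hu
    simp [this, hv]
  · intro g hg
    set x := g.1 with hx
    set y := g.2.1 with hy
    have hd := norm_ne_zero ε hε x y hg
    -- injectivity of the parameter map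
    have hinj : ∀ α β α' β' : F,
        α * x + ε * β * y = α' * x + ε * β' * y → β * x + α * y = β' * x + α' * y →
        α = α' ∧ β = β' := by
      intro α β α' β' e1 e2
      obtain ⟨hu, hv⟩ := key_lemma ε hε x y hg (α - α') (β - β')
        (by linear_combination e1) (by linear_combination e2)
      exact ⟨by linear_combination hu, by linear_combination hv⟩
    constructor
    · intro h
      set a := h.1 with ha
      set b := h.2.1 with hb
      -- cosets are detected by the first two coordinates
      have hcos : ∀ w : Heis F, ((w * h⁻¹).1 = 0 ∧ (w * h⁻¹).2.1 = 0) ↔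
          (w.1 = a ∧ w.2.1 = b) := by
        intro w
        rw [Heis.mul_def, Heis.inv_def]
        dsimp only
        constructor
        · rintro ⟨e1, e2⟩
          exact ⟨by linear_combination e1, by linear_combination e2⟩
        · rintro ⟨e1, e2⟩
          exact ⟨by linear_combination e1, by linear_combination e2⟩
      by_cases hab : a = 0 ∧ b = 0
      · refine ⟨1, ⟨Or.inl rfl, (hcos 1).2 ⟨hab.1.symm, hab.2.symm⟩⟩, ?_⟩
        rintro w ⟨hw1 | ⟨α, β, hαβ, rfl⟩, hw2⟩
        · exact hw1
        · exfalso
          obtain ⟨e1, e2⟩ := (hcos _).1 hw2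
          obtain ⟨hu, hv⟩ := key_lemma ε hε x y hg α β
            (by rw [hab.1] at e1; exact e1) (by rw [hab.2] at e2; exact e2)
          exact hαβ (by simp [hu, hv])
      · set d := x ^ 2 - ε * y ^ 2 with hdd
        set α := (a * x - ε * b * y) / d with hα
        set β := (b * x - a * y) / d with hβ
        have e1 : α * x + ε * β * y = a := by
          rw [hα, hβ]; field_simp; ring
        have e2 : β * x + α * y = b := by
          rw [hα, hβ]; field_simp; ring
        have hαβ : (α, β) ≠ (0, 0) := by
          intro hcon
          obtain ⟨h1, h2⟩ := Prod.mk.injEq .. ▸ hcon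
          injection hcon with c1 c2
          apply hab
          constructor
          · linear_combination -e1 + x * c1 + ε * y * c2
          · linear_combination -e2 + x * c2 + y * c1
        refine ⟨phiFun ε α β g, ⟨Or.inr ⟨α, β, hαβ, rfl⟩, (hcos _).2 ⟨e1, e2⟩⟩, ?_⟩
        rintro w ⟨rfl | ⟨α', β', hαβ', rfl⟩, hw2⟩
        · exfalso
          obtain ⟨c1, c2⟩ := (hcos _).1 hw2
          apply hab
          have c1' : (0 : F) = a := c1
          have c2' : (0 : F) = b := c2
          exact ⟨c1'.symm, c2'.symm⟩
        · obtain ⟨c1, c2⟩ := (hcos _).1 hw2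
          have c1' : α' * x + ε * β' * y = α * x + ε * β * y := c1.trans e1.symm
          have c2' : β' * x + α' * y = β * x + α * y := c2.trans e2.symm
          obtain ⟨ha', hb'⟩ := hinj α' β' α β c1' c2'
          rw [ha', hb']
    · -- cardinality of the orbit
      have himg : {h : Heis F | ∃ α β : F, (α, β) ≠ (0, 0) ∧ h = phiFun ε α β g} =
          (fun p : F × F => phiFun ε p.1 p.2 g) '' {p : F × F | p ≠ (0, 0)} := by
        ext h
        constructor
        · rintro ⟨α, β, hαβ, rfl⟩
          exact ⟨(α, β), hαβ, rfl⟩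
        · rintro ⟨⟨α, β⟩, hp, rfl⟩
          exact ⟨α, β, hp, rfl⟩
      rw [himg, Set.ncard_image_of_injOn]
      · have : {p : F × F | p ≠ (0, 0)} = (Set.univ : Set (F × F)) \ {(0, 0)} := by
          ext p; simp
        rw [this, Set.ncard_diff (by simp), Set.ncard_singleton, Set.ncard_univ,
          Nat.card_eq_fintype_card, Fintype.card_prod, hq, sq]
      · rintro ⟨α, β⟩ _ ⟨α', β'⟩ _ he
        have c1 : α * x + ε * β * y = α' * x + ε * β' * y :=
          congrArg (fun p : Heis F => p.1) he
        have c2 : β * x + α * y = β' * x + α' * y :=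
          congrArg (fun p : Heis F => p.2.1) he
        obtain ⟨h1, h2⟩ := hinj α β α' β' c1 c2
        simp [h1, h2]
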